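/- With θ_{a,b} defined as the argument (divided by 2π) of a + bη, η = (1+√(-7))/2: if 4θ_{a,b} is not an integer, then 1/|sin(4πθ_{a,b})| ≤ √(a² + ab + 2b²) · max{1/|a + b/2|, 1/|b|}. -/
import Mathlib


open Complex Real

noncomputable def eta7 : ℂ := (1 + Complex.I * Real.sqrt 7) / 2

lemma aux_le_sq1 (a b : ℝ) (h : (a+b/2)*(a+b/2) ≤ b*b) :
    a^2+a*b+2*b^2 ≤ 7*(b*b) := by nlinarith

lemma aux_le_sq2 (a b : ℝ) (h : b*b ≤ (a+b/2)*(a+b/2)) :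
    a^2+a*b+2*b^2 ≤ 7*((a+b/2)*(a+b/2)) := by nlinarith

theorem inv_sin_four_pi_theta_bound (a b : ℤ) (hab : ¬(a = 0 ∧ b = 0)) (θ : ℝ)
    (hθ : Complex.exp (2 * π * Complex.I * θ) =
      ((a : ℂ) + (b : ℂ) * eta7) / Real.sqrt ((a : ℝ)^2 + a * b + 2 * b^2))
    (hnint : ¬∃ k : ℤ, 4 * θ = k) :
    1 / |Real.sin (4 * π * θ)| ≤
      Real.sqrt ((a : ℝ)^2 + a * b + 2 * b^2) *
        max (1 / |(a : ℝ) + b / 2|) (1 / |(b : ℝ)|) := by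
  set N : ℝ := (a:ℝ)^2 + a*b + 2*b^2 with hNdef
  have hN0 : 0 < N := by
    rcases not_and_or.mp hab with h | h
    · have : (a:ℝ) ≠ 0 := by exact_mod_cast h
      nlinarith [sq_nonneg (2*(a:ℝ)+b), sq_nonneg (b:ℝ), mul_self_pos.mpr this]
    · have : (b:ℝ) ≠ 0 := by exact_mod_cast h
      nlinarith [sq_nonneg (2*(a:ℝ)+b), mul_self_pos.mpr this]
  have hs0 : 0 < Real.sqrt N := Real.sqrt_pos.mpr hN0
  have hs7 : (0:ℝ) < Real.sqrt 7 := Real.sqrt_pos.mpr (by norm_num)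
  have h77 : Real.sqrt 7 * Real.sqrt 7 = 7 := Real.mul_self_sqrt (by norm_num)
  have hNN : Real.sqrt N * Real.sqrt N = N := Real.mul_self_sqrt hN0.le
  have harg : (2 * (π:ℂ) * Complex.I * θ) = ((2*π*θ : ℝ) : ℂ) * Complex.I := by
    push_cast; ring
  have hz : ((a : ℂ) + (b : ℂ) * eta7) / ((Real.sqrt N : ℝ) : ℂ)
      = Complex.ofReal (((a:ℝ)+b/2)/Real.sqrt N)
        + Complex.ofReal (((b:ℝ)*Real.sqrt 7/2)/Real.sqrt N) * Complex.I := by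
    rw [eta7]
    push_cast
    field_simp
    ring
  rw [harg, hz] at hθ
  have hexp : Complex.exp (((2*π*θ : ℝ) : ℂ) * Complex.I)
      = Complex.ofReal (Real.cos (2*π*θ)) + Complex.ofReal (Real.sin (2*π*θ)) * Complex.I := by
    rw [Complex.exp_mul_I]
    simp [Complex.ofReal_cos, Complex.ofReal_sin]
  rw [hexp] at hθ
  have hcos : Real.cos (2*π*θ) = ((a:ℝ)+b/2)/Real.sqrt N := by
    have := congrArg Complex.re hθ
    simpa only [Complex.add_re, Complex.ofReal_re, Complex.mul_re, Complex.I_re,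
      Complex.I_im, Complex.ofReal_im, mul_zero, mul_one, zero_mul, sub_zero,
      add_zero, zero_add, zero_sub, neg_zero] using this
  have hsin : Real.sin (2*π*θ) = ((b:ℝ)*Real.sqrt 7/2)/Real.sqrt N := by
    have := congrArg Complex.im hθ
    simpa only [Complex.add_im, Complex.ofReal_im, Complex.mul_im, Complex.I_re,
      Complex.I_im, Complex.ofReal_re, mul_zero, mul_one, zero_mul, sub_zero,
      add_zero, zero_add, zero_sub, neg_zero] using this
  have hsin4 : Real.sin (4*π*θ) = ((a:ℝ)+b/2) * b * Real.sqrt 7 / N := by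
    have h2 : (4:ℝ)*π*θ = 2*(2*π*θ) := by ring
    rw [h2, Real.sin_two_mul, hsin, hcos, mul_assoc, div_mul_div_comm, hNN]
    ring
  have hb : (b:ℝ) ≠ 0 := by
    intro h
    have hz : Real.sin (2*π*θ) = 0 := by rw [hsin, h]; norm_num
    rcases Real.sin_eq_zero_iff.mp hz with ⟨n, hn⟩
    apply hnint
    refine ⟨2*n, ?_⟩
    have h' : ((n:ℝ)) * π = (2*θ) * π := by linear_combination hn
    have : (n:ℝ) = 2*θ := mul_right_cancel₀ Real.pi_ne_zero h'
    push_cast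
    linarith [this]
  have hA : ((a:ℝ)+b/2) ≠ 0 := by
    intro h
    have hz : Real.cos (2*π*θ) = 0 := by rw [hcos, h, zero_div]
    rcases Real.cos_eq_zero_iff.mp hz with ⟨n, hn⟩
    apply hnint
    refine ⟨2*n+1, ?_⟩
    have h' : (4*θ) * π = (2*(n:ℝ)+1) * π := by linear_combination 2 * hn
    have : 4*θ = 2*(n:ℝ)+1 := mul_right_cancel₀ Real.pi_ne_zero h'
    push_cast
    linarith [this]
  have habs : |Real.sin (4*π*θ)| = |(a:ℝ)+b/2| * |(b:ℝ)| * Real.sqrt 7 / N := by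
    rw [hsin4, abs_div, abs_mul, abs_mul, abs_of_pos hN0,
      abs_of_pos hs7]
  have hApos : 0 < |(a:ℝ)+b/2| := abs_pos.mpr hA
  have hBpos : 0 < |(b:ℝ)| := abs_pos.mpr hb
  have hAsq : |(a:ℝ)+b/2| * |(a:ℝ)+b/2| = ((a:ℝ)+b/2)*((a:ℝ)+b/2) := abs_mul_abs_self _
  have hBsq : |(b:ℝ)| * |(b:ℝ)| = (b:ℝ)*(b:ℝ) := abs_mul_abs_self _
  rw [habs]
  have key : ∀ M : ℝ, 0 < M → N ≤ 7 * (M*M) → Real.sqrt N ≤ Real.sqrt 7 * M := by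
    intro M hM hle
    have : Real.sqrt N ≤ Real.sqrt (7*(M*M)) := Real.sqrt_le_sqrt hle
    rwa [Real.sqrt_mul (by norm_num), Real.sqrt_mul_self hM.le] at this
  rcases le_total |(a:ℝ)+b/2| |(b:ℝ)| with hc | hc
  · have hmax : max (1 / |(a : ℝ) + b / 2|) (1 / |(b : ℝ)|) = 1 / |(a : ℝ) + b / 2| :=
      max_eq_left (by exact one_div_le_one_div_of_le hApos hc)
    rw [hmax, mul_one_div, one_div_div, div_le_div_iff₀ (by positivity) hApos]
    have hle : Real.sqrt N ≤ Real.sqrt 7 * |(b:ℝ)| := by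
      apply key _ hBpos
      rw [hBsq, hNdef]
      exact aux_le_sq1 a b (by rw [← hAsq, ← hBsq]; exact mul_le_mul hc hc (abs_nonneg _) (abs_nonneg _))
    calc N * |(a:ℝ)+b/2| = (Real.sqrt N * |(a:ℝ)+b/2|) * Real.sqrt N := by
          linear_combination (-|(a:ℝ)+b/2|) * hNN
      _ ≤ (Real.sqrt N * |(a:ℝ)+b/2|) * (Real.sqrt 7 * |(b:ℝ)|) :=
          mul_le_mul_of_nonneg_left hle (by positivity)
      _ = Real.sqrt N * (|(a:ℝ)+b/2| * |(b:ℝ)| * Real.sqrt 7) := by ring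
  · have hmax : max (1 / |(a : ℝ) + b / 2|) (1 / |(b : ℝ)|) = 1 / |(b : ℝ)| :=
      max_eq_right (by exact one_div_le_one_div_of_le hBpos hc)
    rw [hmax, mul_one_div, one_div_div, div_le_div_iff₀ (by positivity) hBpos]
    have hle : Real.sqrt N ≤ Real.sqrt 7 * |(a:ℝ)+b/2| := by
      apply key _ hApos
      rw [hAsq, hNdef]
      exact aux_le_sq2 a b (by rw [← hAsq, ← hBsq]; exact mul_le_mul hc hc (abs_nonneg _) (abs_nonneg _))
    calc N * |(b:ℝ)| = (Real.sqrt N * |(b:ℝ)|) * Real.sqrt N := by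
          linear_combination (-|(b:ℝ)|) * hNN
      _ ≤ (Real.sqrt N * |(b:ℝ)|) * (Real.sqrt 7 * |(a:ℝ)+b/2|) :=
          mul_le_mul_of_nonneg_left hle (by positivity)
      _ = Real.sqrt N * (|(a:ℝ)+b/2| * |(b:ℝ)| * Real.sqrt 7) := by ring
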